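/- Equivalently stated at the level of group presentations: the fundamental group of the classifying space of QC, computed from the presentation with generators the morphisms of QC and relations [∅ ↣ A] = 1 and [f]·[g] = [f∘g], is generated by the classes [A] := [∅ ↠ A] and satisfies, for every distinguished square with corners A, B, D, C, the relation [B]⁻¹[C] = [A]⁻¹[D]. -/

import Mathlib

open CategoryTheory

/-- The data of a CGW-category (Campbell–Zakharevich): a double category given by
two classes of morphisms `Em` (e-morphisms, drawn `↠`) and `Mm` (m-morphisms, drawn `↣`)
on a common class of objects, a class of distinguished squares, a common initial object,
the comparison `phi` between e- and m-morphisms (used on isomorphisms), and the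
kernel/cokernel assignments `k` and `c`. -/
structure CGWData where
  Obj : Type
  Em : Obj → Obj → Type
  Mm : Obj → Obj → Type
  idE : ∀ A, Em A A
  compE : ∀ {A B C}, Em A B → Em B C → Em A C
  idM : ∀ A, Mm A A
  compM : ∀ {A B C}, Mm A B → Mm B C → Mm A C
  /-- `Dist top left bottom right` : a distinguished square with m-morphisms
  `top : TL ↣ TR`, `bottom : BL ↣ BR` and e-morphisms `left : TL ↠ BL`,
  `right : TR ↠ BR`. -/
  Dist : ∀ {A B P Q}, Mm A B → Em A P → Mm P Q → Em B Q → Prop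
  zero : Obj
  initE : ∀ A, Em zero A
  initM : ∀ A, Mm zero A
  phi : ∀ {A B}, Em A B → Mm A B
  kObj : ∀ {A B}, Em A B → Obj
  kMor : ∀ {A B} (g : Em A B), Mm (kObj g) B
  cObj : ∀ {A B}, Mm A B → Obj
  cMor : ∀ {A B} (f : Mm A B), Em (cObj f) B

namespace CGWData

variable (C : CGWData)

def IsIsoE {A B : C.Obj} (f : C.Em A B) : Prop :=
  ∃ g : C.Em B A, C.compE f g = C.idE A ∧ C.compE g f = C.idE B

def IsIsoM {A B : C.Obj} (f : C.Mm A B) : Prop :=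
  ∃ g : C.Mm B A, C.compM f g = C.idM A ∧ C.compM g f = C.idM B

/-- The axioms of a CGW-category, on top of the data of a `CGWData`:
(Z) `zero` is initial in both `Em` and `Mm`; (I) isomorphism squares are distinguished;
(M) all e- and m-morphisms are monic; (K) kernels/cokernels fit into distinguished
squares over the initial object, unique up to unique isomorphism, `c` and `k` are
mutually inverse equivalences (encoded by equifiberedness/equicofiberedness of
distinguished squares, fullness on triangles, and `c`,`k` being mutually inverse on
objects); (A) existence of "sum" squares. -/
structure IsCGW : Prop where
  idE_comp : ∀ {A B : C.Obj} (f : C.Em A B), C.compE (C.idE A) f = f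
  compE_id : ∀ {A B : C.Obj} (f : C.Em A B), C.compE f (C.idE B) = f
  assocE : ∀ {A B D E : C.Obj} (f : C.Em A B) (g : C.Em B D) (h : C.Em D E),
    C.compE (C.compE f g) h = C.compE f (C.compE g h)
  idM_comp : ∀ {A B : C.Obj} (f : C.Mm A B), C.compM (C.idM A) f = f
  compM_id : ∀ {A B : C.Obj} (f : C.Mm A B), C.compM f (C.idM B) = f
  assocM : ∀ {A B D E : C.Obj} (f : C.Mm A B) (g : C.Mm B D) (h : C.Mm D E),
    C.compM (C.compM f g) h = C.compM f (C.compM g h)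
  initE_unique : ∀ {A : C.Obj} (f : C.Em C.zero A), f = C.initE A
  initM_unique : ∀ {A : C.Obj} (f : C.Mm C.zero A), f = C.initM A
  monoE : ∀ {Z A B : C.Obj} (f : C.Em A B) (u v : C.Em Z A),
    C.compE u f = C.compE v f → u = v
  monoM : ∀ {Z A B : C.Obj} (f : C.Mm A B) (u v : C.Mm Z A),
    C.compM u f = C.compM v f → u = v
  phi_iso : ∀ {A B : C.Obj} (f : C.Em A B), C.IsIsoE f → C.IsIsoM (C.phi f)
  dist_isoSq₁ : ∀ {A B : C.Obj} (f : C.Em A B), C.IsIsoE f →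
    C.Dist (C.phi f) f (C.idM B) (C.idE B)
  dist_isoSq₂ : ∀ {A B : C.Obj} (f : C.Em A B), C.IsIsoE f →
    C.Dist (C.idM A) (C.idE A) (C.phi f) f
  dist_horiz : ∀ {A B P Q B₂ Q₂ : C.Obj} {f : C.Mm A B} {g : C.Em A P} {f' : C.Mm P Q}
    {g' : C.Em B Q} {f₂ : C.Mm B B₂} {f₂' : C.Mm Q Q₂} {g₂ : C.Em B₂ Q₂},
    C.Dist f g f' g' → C.Dist f₂ g' f₂' g₂ →
      C.Dist (C.compM f f₂) g (C.compM f' f₂') g₂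
  dist_vert : ∀ {A B P Q P₂ Q₂ : C.Obj} {f : C.Mm A B} {g : C.Em A P} {f' : C.Mm P Q}
    {g' : C.Em B Q} {g₂ : C.Em P P₂} {f₂ : C.Mm P₂ Q₂} {g₂' : C.Em Q Q₂},
    C.Dist f g f' g' → C.Dist f' g₂ f₂ g₂' →
      C.Dist f (C.compE g g₂) f₂ (C.compE g' g₂')
  kDist : ∀ {A B : C.Obj} (g : C.Em A B),
    C.Dist (C.initM A) (C.initE (C.kObj g)) (C.kMor g) g
  cDist : ∀ {A B : C.Obj} (f : C.Mm A B),
    C.Dist (C.initM (C.cObj f)) (C.initE A) f (C.cMor f)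
  k_unique : ∀ {A B K : C.Obj} (g : C.Em A B) (m : C.Mm K B),
    C.Dist (C.initM A) (C.initE K) m g →
      ∃! φ : C.Mm K (C.kObj g), C.IsIsoM φ ∧ C.compM φ (C.kMor g) = m
  c_unique : ∀ {A B K : C.Obj} (f : C.Mm A B) (e : C.Em K B),
    C.Dist (C.initM K) (C.initE A) f e →
      ∃! ψ : C.Em K (C.cObj f), C.IsIsoE ψ ∧ C.compE ψ (C.cMor f) = e
  distKer : ∀ {A B P Q : C.Obj} {f : C.Mm A B} {g : C.Em A P} {f' : C.Mm P Q}
    {g' : C.Em B Q}, C.Dist f g f' g' →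
      ∃ φ : C.Mm (C.kObj g) (C.kObj g'), C.IsIsoM φ ∧
        C.compM (C.kMor g) f' = C.compM φ (C.kMor g')
  distCoker : ∀ {A B P Q : C.Obj} {f : C.Mm A B} {g : C.Em A P} {f' : C.Mm P Q}
    {g' : C.Em B Q}, C.Dist f g f' g' →
      ∃ ψ : C.Em (C.cObj f) (C.cObj f'), C.IsIsoE ψ ∧
        C.compE (C.cMor f) g' = C.compE ψ (C.cMor f')
  c_full : ∀ {A B A₂ B₂ : C.Obj} (f : C.Mm A B) (f₂ : C.Mm A₂ B₂)
    (ι : C.Em (C.cObj f) (C.cObj f₂)) (e : C.Em B B₂), C.IsIsoE ι →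
    C.compE (C.cMor f) e = C.compE ι (C.cMor f₂) →
      ∃ eA : C.Em A A₂, C.Dist f eA f₂ e
  k_full : ∀ {A P A₂ P₂ : C.Obj} (g : C.Em A P) (g₂ : C.Em A₂ P₂)
    (ι : C.Mm (C.kObj g) (C.kObj g₂)) (m : C.Mm P P₂), C.IsIsoM ι →
    C.compM (C.kMor g) m = C.compM ι (C.kMor g₂) →
      ∃ mA : C.Mm A A₂, C.Dist mA g m g₂
  ck : ∀ {A B : C.Obj} (g : C.Em A B),
    ∃ ι : C.Em A (C.cObj (C.kMor g)), C.IsIsoE ι ∧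
      C.compE ι (C.cMor (C.kMor g)) = g
  kc : ∀ {A B : C.Obj} (f : C.Mm A B),
    ∃ ι : C.Mm A (C.kObj (C.cMor f)), C.IsIsoM ι ∧
      C.compM ι (C.kMor (C.cMor f)) = f
  axA : ∀ A B : C.Obj, ∃ (X : C.Obj) (m : C.Mm B X) (e : C.Em A X),
    C.Dist (C.initM A) (C.initE B) m e

end CGWData

/-- The vertex set of the quiver underlying the `Q`-construction. -/
def QV (C : CGWData) : Type := C.Obj

instance (C : CGWData) : Quiver (QV C) :=
  ⟨fun A B => Sum (C.Em A B) (C.Mm A B)⟩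

/-- Objects of `QV C` / `Paths (QV C)` coming from objects of `C`. -/
def pobj (C : CGWData) (A : C.Obj) : CategoryTheory.Paths (QV C) := A

/-- The morphism of `Paths (QV C)` given by a single e-morphism edge. -/
def pE (C : CGWData) {A B : C.Obj} (e : C.Em A B) : pobj C A ⟶ pobj C B :=
  Quiver.Hom.toPath (Sum.inl e)

/-- The morphism of `Paths (QV C)` given by a single m-morphism edge. -/
def pM (C : CGWData) {A B : C.Obj} (m : C.Mm A B) : pobj C A ⟶ pobj C B :=
  Quiver.Hom.toPath (Sum.inr m)

/-- The relations presenting the `Q`-construction of a CGW-category as a quotient of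
the path category on the quiver with an edge `A → B` for every e-morphism and every
m-morphism `A → B`: identities and composition within `E` and within `M`, and the
relation `[f][g'] = [g][f']` for every distinguished square. -/
inductive QRel (C : CGWData) : ∀ {X Y : CategoryTheory.Paths (QV C)},
    (X ⟶ Y) → (X ⟶ Y) → Prop
  | relIdE (A : C.Obj) : QRel C (pE C (C.idE A)) (𝟙 (pobj C A))
  | relIdM (A : C.Obj) : QRel C (pM C (C.idM A)) (𝟙 (pobj C A))
  | relCompE {A B D : C.Obj} (e₁ : C.Em A B) (e₂ : C.Em B D) :
      QRel C (pE C e₁ ≫ pE C e₂) (pE C (C.compE e₁ e₂))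
  | relCompM {A B D : C.Obj} (m₁ : C.Mm A B) (m₂ : C.Mm B D) :
      QRel C (pM C m₁ ≫ pM C m₂) (pM C (C.compM m₁ m₂))
  | relDist {A B P Q : C.Obj} {f : C.Mm A B} {g : C.Em A P} {f' : C.Mm P Q}
      {g' : C.Em B Q} : C.Dist f g f' g' →
      QRel C (pM C f ≫ pE C g') (pE C g ≫ pM C f')

def qRel (C : CGWData) : HomRel (CategoryTheory.Paths (QV C)) :=
  fun {X Y} p q => QRel C (X := X) (Y := Y) p q

/-- The `Q`-construction of a CGW-category, as a quotient of a path category. -/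
def QCat (C : CGWData) : Type := CategoryTheory.Quotient (qRel C)

instance (C : CGWData) : CategoryTheory.Category (QCat C) :=
  inferInstanceAs (CategoryTheory.Category (CategoryTheory.Quotient (qRel C)))

/-- An object of `C` seen in `QCat C`. -/
def qobj (C : CGWData) (A : C.Obj) : QCat C :=
  (CategoryTheory.Quotient.functor (qRel C)).obj (pobj C A)

/-- A path seen in `QCat C`. -/
def qmap (C : CGWData) {A B : C.Obj} (p : pobj C A ⟶ pobj C B) :
    qobj C A ⟶ qobj C B :=
  (CategoryTheory.Quotient.functor (qRel C)).map p

open CategoryTheory in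
/-- Generators for the standard presentation of `π₁(BQC)`: all morphisms of `QC`. -/
def QGen (C : CGWData) : Type := Σ (A B : C.Obj), (qobj C A ⟶ qobj C B)

open CategoryTheory in
/-- The relations of the standard presentation of `π₁(BQC)` coming from the maximal
tree `{∅ ↣ A}` and from composition: `[∅ ↣ A] = 1` and `[f]·[g] = [f ∘ g]`. -/
def QPresRels (C : CGWData) : Set (FreeGroup (QGen C)) :=
  {w | ∃ A : C.Obj, w = FreeGroup.of ⟨C.zero, A, qmap C (pM C (C.initM A))⟩} ∪
  {w | ∃ (A B D : C.Obj) (f : qobj C A ⟶ qobj C B) (g : qobj C B ⟶ qobj C D),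
    w = FreeGroup.of ⟨A, B, f⟩ * FreeGroup.of ⟨B, D, g⟩ *
      (FreeGroup.of ⟨A, D, f ≫ g⟩)⁻¹}

open CategoryTheory in
/-- The class `[A] := [∅ ↠ A]` in the presented fundamental group. -/
def QPresCls (C : CGWData) (A : C.Obj) : PresentedGroup (QPresRels C) :=
  PresentedGroup.of ⟨C.zero, A, qmap C (pE C (C.initE A))⟩

namespace QPf

open CategoryTheory

variable (C : CGWData)

/-- The class of a morphism of `QC` in the presented group. -/
def γ {A B : C.Obj} (f : qobj C A ⟶ qobj C B) : PresentedGroup (QPresRels C) :=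
  PresentedGroup.of ⟨A, B, f⟩

lemma rel_one {w : FreeGroup (QGen C)} (hw : w ∈ QPresRels C) :
    (QuotientGroup.mk w : PresentedGroup (QPresRels C)) = 1 :=
  (QuotientGroup.eq_one_iff w).mpr (Subgroup.subset_normalClosure hw)

lemma γ_comp {A B D : C.Obj} (f : qobj C A ⟶ qobj C B) (g : qobj C B ⟶ qobj C D) :
    γ C f * γ C g = γ C (f ≫ g) := by
  have h := rel_one C (Or.inr ⟨A, B, D, f, g, rfl⟩)
  rw [QuotientGroup.mk_mul, QuotientGroup.mk_mul, QuotientGroup.mk_inv,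
    mul_inv_eq_one] at h
  exact h

lemma qmap_comp {A B D : C.Obj} (p : pobj C A ⟶ pobj C B) (q : pobj C B ⟶ pobj C D) :
    qmap C (p ≫ q) = qmap C p ≫ qmap C q :=
  Functor.map_comp _ p q

lemma qmap_sound {A B : C.Obj} {p q : pobj C A ⟶ pobj C B} (h : QRel C p q) :
    qmap C p = qmap C q :=
  CategoryTheory.Quotient.sound _ h

lemma γ_initM (A : C.Obj) : γ C (qmap C (pM C (C.initM A))) = 1 :=
  rel_one C (Or.inl ⟨A, rfl⟩)

lemma γ_pM (hC : C.IsCGW) {A B : C.Obj} (m : C.Mm A B) :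
    γ C (qmap C (pM C m)) = 1 := by
  have h1 : qmap C (pM C (C.initM A)) ≫ qmap C (pM C m)
      = qmap C (pM C (C.initM B)) := by
    rw [← qmap_comp, qmap_sound C (QRel.relCompM (C.initM A) m),
      hC.initM_unique (C.compM (C.initM A) m)]
  have h2 := γ_comp C (qmap C (pM C (C.initM A))) (qmap C (pM C m))
  rw [h1, γ_initM, γ_initM, one_mul] at h2
  exact h2

lemma γ_pE (hC : C.IsCGW) {A B : C.Obj} (e : C.Em A B) :
    γ C (qmap C (pE C e)) = (QPresCls C A)⁻¹ * QPresCls C B := by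
  have h1 : qmap C (pE C (C.initE A)) ≫ qmap C (pE C e)
      = qmap C (pE C (C.initE B)) := by
    rw [← qmap_comp, qmap_sound C (QRel.relCompE (C.initE A) e),
      hC.initE_unique (C.compE (C.initE A) e)]
  have h2 := γ_comp C (qmap C (pE C (C.initE A))) (qmap C (pE C e))
  rw [h1] at h2
  exact eq_inv_mul_iff_mul_eq.mpr h2

lemma γ_id (A : C.Obj) : γ C (𝟙 (qobj C A)) = 1 := by
  have h := γ_comp C (𝟙 (qobj C A)) (𝟙 (qobj C A))
  rw [Category.comp_id] at h
  exact mul_eq_left.mp h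

lemma path_mem (hC : C.IsCGW) (A : C.Obj) {X : QV C}
    (p : @Quiver.Path (QV C) _ (A : QV C) X) :
    γ C (A := A) (B := X) (qmap C (A := A) (B := X) p) ∈ Subgroup.closure
      {x : PresentedGroup (QPresRels C) | ∃ A, x = QPresCls C A} := by
  induction p with
  | nil =>
    have h : γ C (𝟙 (qobj C A)) ∈ Subgroup.closure
        {x : PresentedGroup (QPresRels C) | ∃ A, x = QPresCls C A} := by
      rw [γ_id]; exact Subgroup.one_mem _
    exact h
  | cons p e ih =>
    rename_i Y Z
    have hedge : γ C (qmap C (A := Y) (B := Z) (Quiver.Hom.toPath e))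
        ∈ Subgroup.closure
          {x : PresentedGroup (QPresRels C) | ∃ A, x = QPresCls C A} := by
      revert e
      change ∀ e : Sum (C.Em Y Z) (C.Mm Y Z), _
      intro e
      cases e with
      | inl g =>
        exact (congrArg (· ∈ Subgroup.closure
          {x : PresentedGroup (QPresRels C) | ∃ A, x = QPresCls C A}) (γ_pE C hC g)).mpr
          (mul_mem (inv_mem (Subgroup.subset_closure ⟨Y, rfl⟩))
          (Subgroup.subset_closure ⟨Z, rfl⟩))
      | inr m =>
        exact (congrArg (· ∈ Subgroup.closure
          {x : PresentedGroup (QPresRels C) | ∃ A, x = QPresCls C A}) (γ_pM C hC m)).mpr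
          (Subgroup.one_mem _)
    have hcomp := γ_comp C (qmap C (A := A) (B := Y) p)
      (qmap C (A := Y) (B := Z) (Quiver.Hom.toPath e))
    exact hcomp ▸ mul_mem ih hedge

lemma γ_mem (hC : C.IsCGW) {A B : C.Obj} (f : qobj C A ⟶ qobj C B) :
    γ C f ∈ Subgroup.closure
      {x : PresentedGroup (QPresRels C) | ∃ A, x = QPresCls C A} := by
  induction f using Quot.inductionOn with
  | _ p => exact path_mem C hC A (X := pobj C B) p

end QPf

open CategoryTheory in
/-- the fundamental group of `BQC`, presented with generators the
morphisms of `QC` and relations `[∅ ↣ A] = 1`, `[f]·[g] = [f ∘ g]`, is generated by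
the classes `[A] = [∅ ↠ A]`, and for every distinguished square with corners
`A` (upper-left), `B` (upper-right), `P` (lower-left), `Q` (lower-right) it satisfies
`[B]⁻¹[Q] = [A]⁻¹[P]`. -/
theorem pi1_presentation (C : CGWData) (hC : C.IsCGW) :
    (Subgroup.closure {x : PresentedGroup (QPresRels C) | ∃ A, x = QPresCls C A} = ⊤) ∧
    (∀ {A B P Q : C.Obj} {f : C.Mm A B} {g : C.Em A P} {f' : C.Mm P Q} {g' : C.Em B Q},
      C.Dist f g f' g' →
        (QPresCls C B)⁻¹ * QPresCls C Q = (QPresCls C A)⁻¹ * QPresCls C P) := by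
  constructor
  · rw [eq_top_iff]
    rintro x -
    obtain ⟨w, rfl⟩ := QuotientGroup.mk_surjective x
    induction w using FreeGroup.induction_on with
    | C1 => exact Subgroup.one_mem _
    | of g =>
      obtain ⟨A, B, f⟩ := g
      exact QPf.γ_mem C hC f
    | inv_of g h => exact inv_mem h
    | mul x y hx hy => exact mul_mem hx hy
  · intro A B P Q f g f' g' hD
    have hs : qmap C (pM C f) ≫ qmap C (pE C g')
        = qmap C (pE C g) ≫ qmap C (pM C f') := by
      rw [← QPf.qmap_comp, ← QPf.qmap_comp]
      exact QPf.qmap_sound C (QRel.relDist hD)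
    have h2 := QPf.γ_comp C (qmap C (pM C f)) (qmap C (pE C g'))
    have h3 := QPf.γ_comp C (qmap C (pE C g)) (qmap C (pM C f'))
    rw [hs, ← h3, QPf.γ_pM C hC, QPf.γ_pM C hC, QPf.γ_pE C hC, QPf.γ_pE C hC,
      one_mul, mul_one] at h2
    exact h2
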